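/- The family G_A is a cone (i.e., closed under multiplication of its members by every scalar λ ≥ 0, where λQ := {λx : x ∈ Q}) if and only if every member of G_A is bounded. -/
import Mathlib


open scoped RealInnerProductSpace Pointwise

noncomputable section

/-- `Q_{A,b} = {x ∈ ℝ^d : a_iᵀx ≤ b_i for all i}`. -/
def Qset {d N : ℕ} (a : Fin N → EuclideanSpace ℝ (Fin d)) (b : Fin N → ℝ) :
    Set (EuclideanSpace ℝ (Fin d)) :=
  {x | ∀ i, ⟪a i, x⟫ ≤ b i}

/-- `G_A = {Q_{A,b} : b ∈ ℝ^N} \ {∅}`. -/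
def GA {d N : ℕ} (a : Fin N → EuclideanSpace ℝ (Fin d)) :
    Set (Set (EuclideanSpace ℝ (Fin d))) :=
  {S | (∃ b, S = Qset a b) ∧ S.Nonempty}

open Filter Topology

/-- An unbounded nonempty `Qset` has a unit recession direction. -/
lemma exists_recession {d N : ℕ} (a : Fin N → EuclideanSpace ℝ (Fin d))
    (b : Fin N → ℝ) (x₀ : EuclideanSpace ℝ (Fin d)) (hx₀ : x₀ ∈ Qset a b)
    (hub : ¬ Bornology.IsBounded (Qset a b)) :
    ∃ v : EuclideanSpace ℝ (Fin d), ‖v‖ = 1 ∧ ∀ i, ⟪a i, v⟫ ≤ 0 := by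
  rw [isBounded_iff_forall_norm_le] at hub
  push_neg at hub
  have h : ∀ n : ℕ, ∃ x ∈ Qset a b, (n : ℝ) + ‖x₀‖ < ‖x‖ := fun n => hub _
  choose x hxQ hxn using h
  have hpos : ∀ n : ℕ, (n : ℝ) < ‖x n - x₀‖ := by
    intro n
    have h1 : ‖x n‖ - ‖x₀‖ ≤ ‖x n - x₀‖ := norm_sub_norm_le _ _
    have := hxn n
    linarith
  have hne : ∀ n : ℕ, x n - x₀ ≠ 0 := by
    intro n h
    have := hpos n
    rw [h, norm_zero] at this
    have : (0:ℝ) ≤ n := Nat.cast_nonneg n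
    linarith [hpos n, (by rw [h, norm_zero] : ‖x n - x₀‖ = (0:ℝ))]
  set v : ℕ → EuclideanSpace ℝ (Fin d) := fun n => ‖x n - x₀‖⁻¹ • (x n - x₀) with hv_def
  have hv : ∀ n, v n ∈ Metric.sphere (0 : EuclideanSpace ℝ (Fin d)) 1 := by
    intro n
    simp only [Metric.mem_sphere, dist_zero_right]
    exact norm_smul_inv_norm (hne n)
  obtain ⟨w, hw, φ, hφ, hconv⟩ := (isCompact_sphere (0 : EuclideanSpace ℝ (Fin d)) 1).tendsto_subseq hv
  refine ⟨w, by simpa using hw, fun i => ?_⟩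
  have hnorm : Tendsto (fun n => ‖x (φ n) - x₀‖) atTop atTop := by
    apply tendsto_atTop_mono (fun n => (le_trans (Nat.cast_le.mpr hφ.le_apply) (hpos (φ n)).le))
    exact tendsto_natCast_atTop_atTop
  have hlim1 : Tendsto (fun n => ⟪a i, v (φ n)⟫) atTop (𝓝 ⟪a i, w⟫) :=
    tendsto_const_nhds.inner hconv
  have hlim2 : Tendsto (fun n => (b i - ⟪a i, x₀⟫) * ‖x (φ n) - x₀‖⁻¹) atTop (𝓝 0) := by
    simpa using (hnorm.inv_tendsto_atTop).const_mul (b i - ⟪a i, x₀⟫)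
  have hle : ∀ n, ⟪a i, v (φ n)⟫ ≤ (b i - ⟪a i, x₀⟫) * ‖x (φ n) - x₀‖⁻¹ := by
    intro n
    have h1 : ⟪a i, v (φ n)⟫ = ‖x (φ n) - x₀‖⁻¹ * (⟪a i, x (φ n)⟫ - ⟪a i, x₀⟫) := by
      simp only [hv_def, real_inner_smul_right, inner_sub_right]
    rw [h1, mul_comm]
    apply mul_le_mul_of_nonneg_right _ (inv_nonneg.mpr (norm_nonneg _))
    have := hxQ (φ n) i
    linarith
  exact le_of_tendsto_of_tendsto' hlim1 hlim2 hle

theorem stmt_4 (d N : ℕ) (hd : 1 ≤ d) (hN : 1 ≤ N)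
    (a : Fin N → EuclideanSpace ℝ (Fin d))
    (ha_inj : Function.Injective a) (ha_norm : ∀ i, ‖a i‖ = 1) :
    (∀ lam : ℝ, 0 ≤ lam → ∀ S ∈ GA a, lam • S ∈ GA a) ↔
      (∀ S ∈ GA a, Bornology.IsBounded S) := by
  have hzero_mem : (0 : EuclideanSpace ℝ (Fin d)) ∈ Qset a (fun _ => 0) := by
    intro i; simp [Qset]
  constructor
  · -- cone → bounded
    intro hc S hS
    obtain ⟨⟨b, rfl⟩, x₀, hx₀⟩ := hS
    by_contra hub
    obtain ⟨v, hv1, hv2⟩ := exists_recession a b x₀ hx₀ hub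
    have h0 : (0:ℝ) • Qset a (fun _ => 0) ∈ GA a :=
      hc 0 le_rfl _ ⟨⟨fun _ => 0, rfl⟩, ⟨0, hzero_mem⟩⟩
    rw [Set.zero_smul_set ⟨0, hzero_mem⟩] at h0
    obtain ⟨⟨b', hb'⟩, -⟩ := h0
    have h0b' : (0 : EuclideanSpace ℝ (Fin d)) ∈ Qset a b' := by
      rw [← hb']; rfl
    have hb'nn : ∀ i, (0:ℝ) ≤ b' i := by
      intro i
      have := h0b' i
      simpa using this
    have hvmem : v ∈ Qset a b' := fun i => le_trans (hv2 i) (hb'nn i)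
    rw [← hb'] at hvmem
    have : v = 0 := hvmem
    rw [this, norm_zero] at hv1
    norm_num at hv1
  · -- bounded → cone
    intro hb lam hlam S hS
    obtain ⟨⟨b, rfl⟩, hne⟩ := hS
    rcases eq_or_lt_of_le hlam with h0 | hpos
    · -- lam = 0
      rw [← h0, Set.zero_smul_set hne]
      have hQ0 : Qset a (fun _ => 0) = {0} := by
        have hbd := hb (Qset a (fun _ => 0)) ⟨⟨fun _ => 0, rfl⟩, ⟨0, hzero_mem⟩⟩
        rw [isBounded_iff_forall_norm_le] at hbd
        obtain ⟨C, hC⟩ := hbd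
        ext y
        simp only [Set.mem_singleton_iff]
        constructor
        · intro hy
          by_contra hy0
          have hyn : (0:ℝ) < ‖y‖ := norm_pos_iff.mpr hy0
          set t : ℝ := (C + 1) / ‖y‖ with ht
          have htn : 0 ≤ t := by
            apply div_nonneg _ hyn.le
            have := hC 0 hzero_mem
            simp at this
            linarith
          have hty : t • y ∈ Qset a (fun _ => 0) := by
            intro i
            have := hy i
            simp only [Qset, Set.mem_setOf_eq] at this ⊢
            rw [real_inner_smul_right]
            exact mul_nonpos_of_nonneg_of_nonpos htn this
          have := hC _ hty
          rw [norm_smul, Real.norm_eq_abs, abs_of_nonneg htn, ht,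
            div_mul_cancel₀ _ hyn.ne'] at this
          linarith
        · rintro rfl; exact hzero_mem
      refine ⟨⟨fun _ => 0, ?_⟩, ⟨0, rfl⟩⟩
      rw [hQ0]
      rfl
    · -- lam > 0
      refine ⟨⟨fun i => lam * b i, ?_⟩, hne.smul_set⟩
      ext z
      constructor
      · rintro ⟨y, hy, rfl⟩ i
        rw [real_inner_smul_right]
        exact mul_le_mul_of_nonneg_left (hy i) hlam
      · intro hz
        refine ⟨lam⁻¹ • z, fun i => ?_, ?_⟩
        · rw [real_inner_smul_right]
          have := hz i
          calc lam⁻¹ * ⟪a i, z⟫ ≤ lam⁻¹ * (lam * b i) :=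
                mul_le_mul_of_nonneg_left this (inv_nonneg.mpr hlam)
            _ = b i := by field_simp
        · show lam • lam⁻¹ • z = z
          rw [smul_smul, mul_inv_cancel₀ hpos.ne', one_smul]
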